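/- Let n, m, r be natural numbers and μ, λ reals with 1 − 2μλ ≥ 0. Let (W_s)_{s∈ℕ} and (G_s)_{s∈ℕ} be sequences of n×m real matrices satisfying W_{s+1} = (1 − 2μλ)·W_s − μ·G_s for all s, and rank(G_s) ≤ r for all s. Then for every t ∈ ℕ and every k ≤ t there exists an n×m real matrix M with rank(M) ≤ r·k and ‖W_t − M‖_F ≤ (1 − 2μλ)^k · ‖W_{t−k}‖_F. -/
import Mathlib

noncomputable def frobNorm {n m : ℕ} (A : Matrix (Fin n) (Fin m) ℝ) : ℝ :=
  Real.sqrt (∑ i, ∑ j, (A i j) ^ 2)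

lemma frobNorm_smul {n m : ℕ} (c : ℝ) (A : Matrix (Fin n) (Fin m) ℝ) :
    frobNorm (c • A) = |c| * frobNorm A := by
  unfold frobNorm
  have : ∑ i, ∑ j, ((c • A) i j) ^ 2 = c ^ 2 * ∑ i, ∑ j, (A i j) ^ 2 := by
    simp [Finset.mul_sum, mul_pow]
  rw [this, Real.sqrt_mul (sq_nonneg c), Real.sqrt_sq_eq_abs]

lemma myrank_smul_le {n m : ℕ} (c : ℝ) (A : Matrix (Fin n) (Fin m) ℝ) :
    (c • A).rank ≤ A.rank := by
  apply Submodule.finrank_mono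
  rintro x ⟨y, rfl⟩
  exact ⟨c • y, by simp [Matrix.mulVecLin, Matrix.mulVec_smul, Matrix.smul_mulVec]⟩

lemma myrank_add_le {n m : ℕ} (A B : Matrix (Fin n) (Fin m) ℝ) :
    (A + B).rank ≤ A.rank + B.rank := by
  have h : LinearMap.range (A + B).mulVecLin ≤
      LinearMap.range A.mulVecLin ⊔ LinearMap.range B.mulVecLin := by
    rintro x ⟨y, rfl⟩
    simp only [Matrix.mulVecLin_apply, Matrix.add_mulVec]
    exact Submodule.add_mem_sup ⟨y, rfl⟩ ⟨y, rfl⟩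
  exact (Submodule.finrank_mono h).trans
    (Submodule.finrank_add_le_finrank_add_finrank _ _)

/-- For the SGD-with-weight-decay recursion `W_{s+1} = (1−2μλ)·W_s − μ·G_s`
with `rank(G_s) ≤ r` and `1 − 2μλ ≥ 0`, for every `t` and `k ≤ t` there is a matrix `M`
with `rank(M) ≤ r·k` and `‖W_t − M‖_F ≤ (1−2μλ)^k · ‖W_{t−k}‖_F`. -/
theorem stmt1 {n m r : ℕ} (μ lam : ℝ) (hμlam : 1 - 2 * μ * lam ≥ 0)
    (W G : ℕ → Matrix (Fin n) (Fin m) ℝ)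
    (hW : ∀ s, W (s + 1) = (1 - 2 * μ * lam) • W s - μ • G s)
    (hG : ∀ s, (G s).rank ≤ r) :
    ∀ t k : ℕ, k ≤ t →
      ∃ M : Matrix (Fin n) (Fin m) ℝ, M.rank ≤ r * k ∧
        frobNorm (W t - M) ≤ (1 - 2 * μ * lam) ^ k * frobNorm (W (t - k)) := by
  set c := 1 - 2 * μ * lam with hc
  intro t k
  induction k generalizing t with
  | zero =>
    intro _
    exact ⟨0, by simp, by simp⟩
  | succ k ih =>
    intro hkt
    obtain ⟨t', rfl⟩ : ∃ t', t = t' + 1 := ⟨t - 1, by omega⟩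
    obtain ⟨M, hM, hnorm⟩ := ih t' (by omega)
    refine ⟨c • M - μ • G t', ?_, ?_⟩
    · have h1 : (c • M - μ • G t').rank ≤ (c • M).rank + ((-μ) • G t').rank := by
        rw [sub_eq_add_neg, ← neg_smul]
        exact myrank_add_le _ _
      calc (c • M - μ • G t').rank ≤ (c • M).rank + ((-μ) • G t').rank := h1
        _ ≤ M.rank + (G t').rank := add_le_add (myrank_smul_le _ _) (myrank_smul_le _ _)
        _ ≤ r * k + r := add_le_add hM (hG t')
        _ = r * (k + 1) := by ring
    · have hrw : W (t' + 1) - (c • M - μ • G t') = c • (W t' - M) := by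
        rw [hW t']
        simp [smul_sub]
      have : t' + 1 - (k + 1) = t' - k := by omega
      rw [hrw, this, frobNorm_smul, abs_of_nonneg hμlam, pow_succ, mul_comm (c ^ k) c,
        mul_assoc]
      exact mul_le_mul_of_nonneg_left hnorm hμlam
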